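/- For every infinite compact Hausdorff space X, the weight of X (the least cardinality of a topological basis of X) is equal to the density character of the Banach space C(X, ℂ) of continuous complex-valued functions on X with the supremum norm (the least cardinality of a dense subset of C(X, ℂ)). -/

import Mathlib

open Cardinal

/-- The weight of a topological space: the least cardinality of a topological basis. -/
noncomputable def topWeight (X : Type u) [TopologicalSpace X] : Cardinal.{u} :=
  sInf {c : Cardinal.{u} | ∃ B : Set (Set X), TopologicalSpace.IsTopologicalBasis B ∧ #B = c}

/-- The density character of a topological space: the least cardinality of a dense subset. -/
noncomputable def densityChar (Y : Type u) [TopologicalSpace Y] : Cardinal.{u} :=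
  sInf {c : Cardinal.{u} | ∃ D : Set Y, Dense D ∧ #D = c}

open TopologicalSpace Set

lemma aux_basis_infinite {X : Type u} [TopologicalSpace X] [T2Space X] [Infinite X]
    {B : Set (Set X)} (hB : IsTopologicalBasis B) : ℵ₀ ≤ #B := by
  by_contra h
  push_neg at h
  have hinj : Function.Injective (fun x : X => {b : ↥B | x ∈ (b : Set X)}) := by
    intro x y hxy
    simp only [Set.ext_iff, mem_setOf_eq] at hxy
    have hins : Inseparable x y := by
      rw [inseparable_iff_forall_isOpen]
      intro s hs
      constructor
      · intro hx
        obtain ⟨b, hbB, hxb, hbs⟩ := hB.exists_subset_of_mem_open hx hs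
        exact hbs ((hxy ⟨b, hbB⟩).mp hxb)
      · intro hy
        obtain ⟨b, hbB, hyb, hbs⟩ := hB.exists_subset_of_mem_open hy hs
        exact hbs ((hxy ⟨b, hbB⟩).mpr hyb)
    exact hins.eq
  have h1 : #X ≤ #(Set ↥B) := mk_le_of_injective hinj
  rw [mk_set] at h1
  have h2 : (2 : Cardinal.{u}) ^ #↥B < ℵ₀ :=
    power_lt_aleph0 (by exact_mod_cast nat_lt_aleph0 2) h
  exact absurd ((aleph0_le_mk X).trans h1) (not_le.mpr h2)

lemma aux_rat_dense : Dense {z : ℂ | ∃ q r : ℚ, (q : ℂ) + (r : ℂ) * Complex.I = z} := by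
  rw [Metric.dense_iff]
  intro z ε hε
  obtain ⟨q, hq⟩ := exists_rat_near z.re (half_pos hε)
  obtain ⟨r, hr⟩ := exists_rat_near z.im (half_pos hε)
  refine ⟨(q : ℂ) + (r : ℂ) * Complex.I, Metric.mem_ball.mpr ?_, q, r, rfl⟩
  rw [Complex.dist_eq]
  calc ‖(q:ℂ) + (r:ℂ)*Complex.I - z‖
      ≤ |((q:ℂ) + (r:ℂ)*Complex.I - z).re| + |((q:ℂ) + (r:ℂ)*Complex.I - z).im| :=
        Complex.norm_le_abs_re_add_abs_im _
    _ < ε := by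
        simp only [Complex.sub_re, Complex.add_re, Complex.mul_re,
          Complex.I_re, Complex.I_im, Complex.sub_im, Complex.add_im,
          Complex.mul_im, Complex.ratCast_re, Complex.ratCast_im]
        rw [abs_sub_comm z.re] at hq
        rw [abs_sub_comm z.im] at hr
        have h1 : |(q:ℝ) + ((r:ℝ) * 0 - 0 * 1) - z.re| = |(q:ℝ) - z.re| := by ring_nf
        have h2 : |(0:ℝ) + ((r:ℝ) * 1 + 0 * 0) - z.im| = |(r:ℝ) - z.im| := by ring_nf
        rw [h1, h2]
        linarith

lemma aux_weight_le {X : Type u} [TopologicalSpace X] [CompactSpace X] [T2Space X] :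
    topWeight X ≤ densityChar C(X, ℂ) := by
  have hne : {c : Cardinal.{u} | ∃ D : Set C(X, ℂ), Dense D ∧ #D = c}.Nonempty :=
    ⟨#(univ : Set C(X, ℂ)), univ, dense_univ, rfl⟩
  obtain ⟨D, hD, hDc⟩ := csInf_mem hne
  set 𝔅 : Set (Set X) := (fun g : C(X, ℂ) => {y | (1 : ℝ)/2 < ‖g y‖}) '' D with h𝔅
  have hbasis : IsTopologicalBasis 𝔅 := by
    apply isTopologicalBasis_of_isOpen_of_nhds
    · rintro _ ⟨g, -, rfl⟩
      exact isOpen_lt continuous_const g.continuous.norm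
    · intro a u hau hu
      obtain ⟨f, hf0, hf1, hf01⟩ :=
        exists_continuous_zero_one_of_isClosed hu.isClosed_compl isClosed_singleton
          (Set.disjoint_left.mpr (fun z hz hz' => hz (hz' ▸ hau)))
      set F : C(X, ℂ) := ⟨fun y => ((f y : ℝ) : ℂ), Complex.continuous_ofReal.comp f.continuous⟩
        with hF
      obtain ⟨g, hgball, hgD⟩ := Metric.dense_iff.mp hD F (1/4) (by norm_num)
      have hdist : dist g F < 1/4 := Metric.mem_ball.mp hgball
      refine ⟨{y | (1 : ℝ)/2 < ‖g y‖}, ⟨g, hgD, rfl⟩, ?_, ?_⟩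
      · have h1 : dist (g a) (F a) ≤ dist g F := ContinuousMap.dist_apply_le_dist a
        have hFa : ‖F a‖ = 1 := by
          have : f a = 1 := hf1 rfl
          simp [hF, this]
        have h2 : ‖F a‖ - ‖g a‖ ≤ ‖F a - g a‖ := norm_sub_norm_le _ _
        rw [← dist_eq_norm] at h2
        rw [dist_comm] at h1
        show (1 : ℝ)/2 < ‖g a‖
        linarith
      · intro y hy
        by_contra hyu
        have hf : f y = 0 := hf0 hyu
        have hFy : F y = 0 := by simp [hF, hf]
        have h1 : dist (g y) (F y) ≤ dist g F := ContinuousMap.dist_apply_le_dist y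
        rw [hFy, dist_zero_right] at h1
        have : (1 : ℝ)/2 < ‖g y‖ := hy
        linarith
  calc topWeight X ≤ #𝔅 := csInf_le' ⟨𝔅, hbasis, rfl⟩
    _ ≤ #D := mk_image_le
    _ = densityChar C(X, ℂ) := hDc

lemma aux_dense_le {X : Type u} [TopologicalSpace X] [CompactSpace X] [T2Space X] [Infinite X]
    {B : Set (Set X)} (hB : IsTopologicalBasis B) : densityChar C(X, ℂ) ≤ #B := by
  have hBinf : ℵ₀ ≤ #B := aux_basis_infinite hB
  -- pairs of basis elements with closure inclusion
  let P := {p : ↥B × ↥B // closure (p.1 : Set X) ⊆ (p.2 : Set X)}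
  have hfun : ∀ p : P, ∃ f : C(X, ℝ),
      EqOn f 0 ((p.1.2 : Set X))ᶜ ∧ EqOn f 1 (closure (p.1.1 : Set X)) ∧
        ∀ x, f x ∈ Icc (0:ℝ) 1 := fun p =>
    exists_continuous_zero_one_of_isClosed (hB.isOpen p.1.2.2).isClosed_compl isClosed_closure
      (Set.disjoint_left.mpr fun z hz hz' => hz (p.2 hz'))
  choose f hf0 hf1 _hf01 using hfun
  let toC : C(X, ℝ) → C(X, ℂ) := fun g => ⟨fun y => ((g y : ℝ) : ℂ),
    Complex.continuous_ofReal.comp g.continuous⟩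
  let S : Set C(X, ℂ) := Set.range fun p => toC (f p)
  let Ic : C(X, ℂ) := algebraMap ℂ C(X, ℂ) Complex.I
  let T : Set C(X, ℂ) := S ∪ {Ic}
  let Bsub : Subalgebra ℚ C(X, ℂ) := Algebra.adjoin ℚ T
  let Bc : Subalgebra ℚ C(X, ℂ) := Bsub.topologicalClosure
  have hIc : Ic ∈ Bsub := Algebra.subset_adjoin (Or.inr rfl)
  have hS : S ⊆ ↑Bsub := fun s hs => Algebra.subset_adjoin (Or.inl hs)
  have hBcBc : (Bc : Set C(X, ℂ)) = closure ↑Bsub := Bsub.topologicalClosure_coe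
  -- rational constants
  have hqconst : ∀ q : ℚ, algebraMap ℂ C(X, ℂ) (q : ℂ) ∈ Bsub := by
    intro q
    have : algebraMap ℂ C(X, ℂ) (q : ℂ) = algebraMap ℚ C(X, ℂ) q := by
      ext x; simp
    rw [this]; exact Bsub.algebraMap_mem q
  -- all complex constants are in the closure
  have hconst : ∀ c : ℂ, algebraMap ℂ C(X, ℂ) c ∈ Bc := by
    have hcont : Continuous (fun c : ℂ => algebraMap ℂ C(X, ℂ) c) := by
      have : (fun c : ℂ => algebraMap ℂ C(X, ℂ) c) = fun c => ContinuousMap.const X c := rfl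
      rw [this]; exact ContinuousMap.continuous_const'
    have hWclosed : IsClosed {c : ℂ | algebraMap ℂ C(X, ℂ) c ∈ Bc} := by
      have := Bsub.isClosed_topologicalClosure
      exact IsClosed.preimage hcont this
    have hsub : {z : ℂ | ∃ q r : ℚ, (q : ℂ) + (r : ℂ) * Complex.I = z} ⊆
        {c : ℂ | algebraMap ℂ C(X, ℂ) c ∈ Bc} := by
      rintro _ ⟨q, r, rfl⟩
      show algebraMap ℂ C(X, ℂ) ((q : ℂ) + (r : ℂ) * Complex.I) ∈ Bc
      rw [map_add, map_mul]
      exact add_mem (Bsub.le_topologicalClosure (hqconst q))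
        (mul_mem (Bsub.le_topologicalClosure (hqconst r)) (Bsub.le_topologicalClosure hIc))
    intro c
    have : c ∈ closure {z : ℂ | ∃ q r : ℚ, (q : ℂ) + (r : ℂ) * Complex.I = z} :=
      aux_rat_dense c
    exact (hWclosed.closure_subset_iff.mpr hsub) this
  -- star-closedness of Bsub
  have hstar : ∀ g ∈ Bsub, star g ∈ Bsub := by
    intro g hg
    refine Algebra.adjoin_induction (p := fun x _ => star x ∈ Bsub) ?_ ?_ ?_ ?_ hg
    · rintro x (hx | hx)
      · obtain ⟨p, rfl⟩ := hx
        have : star (toC (f p)) = toC (f p) := by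
          ext y
          show star (((f p) y : ℝ) : ℂ) = (((f p) y : ℝ) : ℂ)
          simp [Complex.star_def, Complex.conj_ofReal]
        rw [this]; exact hS ⟨p, rfl⟩
      · rw [hx]
        have : star Ic = -Ic := by
          ext y
          show star ((algebraMap ℂ C(X,ℂ) Complex.I) y) = (-(algebraMap ℂ C(X,ℂ) Complex.I)) y
          simp [Complex.star_def, Complex.conj_I]
        rw [this]; exact neg_mem hIc
    · intro q
      have : star (algebraMap ℚ C(X, ℂ) q) = algebraMap ℚ C(X, ℂ) q := by
        ext y
        show star ((algebraMap ℚ C(X,ℂ) q) y) = (algebraMap ℚ C(X,ℂ) q) y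
        simp [Complex.star_def]
      rw [this]; exact Bsub.algebraMap_mem q
    · intro x y _ _ hx hy; rw [star_add]; exact add_mem hx hy
    · intro x y _ _ hx hy; rw [star_mul]; exact mul_mem hy hx
  -- the ℂ-star-subalgebra structure on the closure
  let Asub : Subalgebra ℂ C(X, ℂ) :=
    { toSubsemiring := Bc.toSubsemiring
      algebraMap_mem' := hconst }
  let Astar : StarSubalgebra ℂ C(X, ℂ) :=
    { toSubalgebra := Asub
      star_mem' := by
        intro g hg
        have hg' : g ∈ closure (Bsub : Set C(X, ℂ)) := by rwa [← hBcBc]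
        have h1 : star g ∈ star '' closure (Bsub : Set C(X, ℂ)) := mem_image_of_mem _ hg'
        have h2 : star '' closure (Bsub : Set C(X, ℂ)) ⊆
            closure (star '' (Bsub : Set C(X, ℂ))) :=
          image_closure_subset_closure_image continuous_star
        have h3 : star '' (Bsub : Set C(X, ℂ)) ⊆ (Bsub : Set C(X, ℂ)) := by
          rintro _ ⟨x, hx, rfl⟩; exact hstar x hx
        have : star g ∈ closure (Bsub : Set C(X, ℂ)) :=
          (closure_mono h3) (h2 h1)
        show star g ∈ Bc
        rwa [← SetLike.mem_coe, hBcBc] }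
  have hsep : Astar.SeparatesPoints := by
    intro x y hxy
    obtain ⟨V, hVB, hxV, hVy⟩ := hB.exists_subset_of_mem_open
      (show x ∈ ({y}ᶜ : Set X) from hxy) isOpen_compl_singleton
    have hVnhds : V ∈ nhds x := (hB.isOpen hVB).mem_nhds hxV
    obtain ⟨s, hs, hsclosed, hsV⟩ := exists_mem_nhds_isClosed_subset hVnhds
    obtain ⟨U, hUB, hxU, hUs⟩ := hB.exists_subset_of_mem_open
      (mem_interior_iff_mem_nhds.mpr hs) isOpen_interior
    have hcl : closure U ⊆ V :=
      (hsclosed.closure_subset_iff.mpr (hUs.trans interior_subset)).trans hsV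
    let p : P := ⟨(⟨U, hUB⟩, ⟨V, hVB⟩), hcl⟩
    refine ⟨toC (f p), ⟨toC (f p), ?_, rfl⟩, ?_⟩
    · show toC (f p) ∈ (Astar : Set C(X, ℂ))
      show toC (f p) ∈ Bc
      exact Bsub.le_topologicalClosure (hS ⟨p, rfl⟩)
    · have hx1 : (f p) x = 1 := hf1 p (subset_closure hxU)
      have hy0 : (f p) y = 0 := hf0 p (fun hyV => (hVy hyV) rfl)
      show ((f p x : ℝ) : ℂ) ≠ ((f p y : ℝ) : ℂ)
      rw [hx1, hy0]; norm_num
  have htop : Astar.topologicalClosure = ⊤ :=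
    ContinuousMap.starSubalgebra_topologicalClosure_eq_top_of_separatesPoints Astar hsep
  have hdense : Dense (Bsub : Set C(X, ℂ)) := by
    intro g
    have hg : g ∈ Astar.topologicalClosure := htop ▸ StarSubalgebra.mem_top
    have hg' : g ∈ closure (Astar : Set C(X, ℂ)) := hg
    have hAB : (Astar : Set C(X, ℂ)) = closure (Bsub : Set C(X, ℂ)) := hBcBc
    rwa [hAB, closure_closure] at hg'
  -- cardinality computation
  have hTcard : #↥T ≤ #B := by
    have h1 : #↥T ≤ #↥S + #({Ic} : Set C(X, ℂ)) := mk_union_le _ _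
    have h2 : #↥S ≤ #P := mk_range_le
    have h3 : #P ≤ #(↥B × ↥B) := mk_subtype_le _
    have h4 : #(↥B × ↥B) = #↥B * #↥B := by simp [Cardinal.mk_prod]
    have h5 : #↥B * #↥B = #↥B := mul_eq_self hBinf
    have h6 : #({Ic} : Set C(X, ℂ)) = 1 := mk_singleton _
    calc #↥T ≤ #↥S + #({Ic} : Set C(X, ℂ)) := h1
      _ ≤ #↥B + 1 := by
          rw [h6]
          exact add_le_add_left (h2.trans (h3.trans (le_of_eq (h4.trans h5)))) 1
      _ ≤ #↥B + #↥B := add_le_add_right (one_le_aleph0.trans hBinf) _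
      _ = #↥B := add_eq_self hBinf
  have hcard : #↥Bsub ≤ #B := by
    have heq : (Bsub : Set C(X, ℂ)) =
        Set.range ⇑(MvPolynomial.aeval (R := ℚ) ((↑) : ↥T → C(X, ℂ))) := by
      rw [show Bsub = Algebra.adjoin ℚ T from rfl, Algebra.adjoin_eq_range]; rfl
    have h1 : #↥Bsub ≤ #(MvPolynomial ↥T ℚ) :=
      calc #↥Bsub = #↥(Bsub : Set C(X, ℂ)) := rfl
        _ = #↥(Set.range ⇑(MvPolynomial.aeval (R := ℚ) ((↑) : ↥T → C(X, ℂ)))) := by rw [heq]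
        _ ≤ #(MvPolynomial ↥T ℚ) := mk_range_le
    have h2 : #(MvPolynomial ↥T ℚ) ≤
        max (max (Cardinal.lift.{u} #ℚ) (Cardinal.lift.{0} #↥T)) ℵ₀ :=
      MvPolynomial.cardinalMk_le_max_lift
    have h3 : max (max (Cardinal.lift.{u} #ℚ) (Cardinal.lift.{0} #↥T)) ℵ₀ ≤ #B := by
      rw [show Cardinal.lift.{u} #ℚ = ℵ₀ by simp, Cardinal.lift_uzero]
      exact max_le (max_le hBinf hTcard) hBinf
    exact h1.trans (h2.trans h3)
  calc densityChar C(X, ℂ) ≤ #↥(Bsub : Set C(X, ℂ)) := csInf_le' ⟨_, hdense, rfl⟩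
    _ ≤ #B := hcard


/-- The weight of an infinite compact Hausdorff space `X` equals the density character of
the Banach space `C(X, ℂ)` of continuous complex-valued functions with the supremum norm. -/
theorem stmt_2 (X : Type u) [TopologicalSpace X] [CompactSpace X] [T2Space X] [Infinite X] :
    topWeight X = densityChar C(X, ℂ) := by
  refine le_antisymm aux_weight_le ?_
  have hne : {c : Cardinal.{u} | ∃ B : Set (Set X),
      TopologicalSpace.IsTopologicalBasis B ∧ #B = c}.Nonempty :=
    ⟨_, {U : Set X | IsOpen U}, isTopologicalBasis_opens, rfl⟩
  obtain ⟨B, hB, hBc⟩ := csInf_mem hne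
  exact le_of_le_of_eq (aux_dense_le hB) hBc
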